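/- Let A be a weakly amenable Banach algebra such that every closed two-sided ideal of A has a quasi-central bounded approximate identity. Then A is ideally amenable: for every closed two-sided ideal I of A, every continuous derivation A → I* is inner. -/

import Mathlib

open ContinuousLinearMap Filter Topology

namespace Paper

structure Bimod (A : Type*) [NormedRing A] [NormedAlgebra ℂ A]
    (X : Type*) [NormedAddCommGroup X] [NormedSpace ℂ X] where
  l : A → X →L[ℂ] X
  r : A → X →L[ℂ] X
  l_mul : ∀ a b x, l (a * b) x = l a (l b x)
  r_mul : ∀ a b x, r (a * b) x = r b (r a x)
  lr : ∀ a b x, l a (r b x) = r b (l a x)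

variable {A : Type*} [NormedRing A] [NormedAlgebra ℂ A]
variable {X : Type*} [NormedAddCommGroup X] [NormedSpace ℂ X]

noncomputable def Bimod.dual (M : Bimod A X) : Bimod A (X →L[ℂ] ℂ) where
  l a := (compL ℂ X X ℂ).flip (M.r a)
  r a := (compL ℂ X X ℂ).flip (M.l a)
  l_mul a b f := by ext x; simp [M.r_mul]
  r_mul a b f := by ext x; simp [M.l_mul]
  lr a b f := by ext x; simp [M.lr]

def IsDerivation (M : Bimod A X) (D : A →L[ℂ] X) : Prop :=
  ∀ a b, D (a * b) = M.l a (D b) + M.r b (D a)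

def IsInner (M : Bimod A X) (D : A →L[ℂ] X) : Prop :=
  ∃ x, ∀ a, D a = M.l a x - M.r a x

noncomputable def Bimod.restrict (M : Bimod A X) (Y : Submodule ℂ X)
    (hl : ∀ a, ∀ y ∈ Y, M.l a y ∈ Y) (hr : ∀ a, ∀ y ∈ Y, M.r a y ∈ Y) :
    Bimod A Y where
  l a := ((M.l a).comp Y.subtypeL).codRestrict Y fun y => hl a y y.2
  r a := ((M.r a).comp Y.subtypeL).codRestrict Y fun y => hr a y y.2
  l_mul a b y := Subtype.ext (M.l_mul a b y)
  r_mul a b y := Subtype.ext (M.r_mul a b y)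
  lr a b y := Subtype.ext (M.lr a b y)

noncomputable def algBimod (A : Type*) [NormedRing A] [NormedAlgebra ℂ A] : Bimod A A where
  l a := ContinuousLinearMap.mul ℂ A a
  r a := (ContinuousLinearMap.mul ℂ A).flip a
  l_mul a b x := mul_assoc a b x
  r_mul a b x := (mul_assoc x a b).symm
  lr a b x := (mul_assoc a x b).symm

noncomputable def idealBimod (I : Submodule ℂ A)
    (hL : ∀ a, ∀ x ∈ I, a * x ∈ I) (hR : ∀ a, ∀ x ∈ I, x * a ∈ I) :
    Bimod A I where
  l a := ((ContinuousLinearMap.mul ℂ A a).comp I.subtypeL).codRestrict I fun x => hL a x x.2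
  r a := (((ContinuousLinearMap.mul ℂ A).flip a).comp I.subtypeL).codRestrict I fun x => hR a x x.2
  l_mul a b x := Subtype.ext (mul_assoc a b (x : A))
  r_mul a b x := Subtype.ext (mul_assoc (x : A) a b).symm
  lr a b x := Subtype.ext (mul_assoc a (x : A) b).symm

theorem stmt_8
    {A : Type*} [NormedRing A] [NormedAlgebra ℂ A] [CompleteSpace A]
    (hwa : ∀ D : A →L[ℂ] (A →L[ℂ] ℂ),
        IsDerivation (algBimod A).dual D → IsInner (algBimod A).dual D)
    (hqcbai : ∀ (I : Submodule ℂ A), IsClosed (I : Set A) →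
        (∀ a : A, ∀ x ∈ I, a * x ∈ I) → (∀ a : A, ∀ x ∈ I, x * a ∈ I) →
        ∃ (ι : Type) (p : Filter ι) (e : ι → ↥I), p.NeBot ∧
          (∃ C : ℝ, ∀ i, ‖e i‖ ≤ C) ∧
          (∀ x : ↥I, Tendsto (fun i => (e i : A) * (x : A)) p (𝓝 (x : A)) ∧
                     Tendsto (fun i => (x : A) * (e i : A)) p (𝓝 (x : A))) ∧
          (∀ a : A, Tendsto (fun i => a * (e i : A) - (e i : A) * a) p (𝓝 0))) :
    ∀ (I : Submodule ℂ A) (hIc : IsClosed (I : Set A))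
      (hL : ∀ a : A, ∀ x ∈ I, a * x ∈ I) (hR : ∀ a : A, ∀ x ∈ I, x * a ∈ I),
      ∀ D : A →L[ℂ] (↥I →L[ℂ] ℂ),
        IsDerivation (idealBimod I hL hR).dual D → IsInner (idealBimod I hL hR).dual D := by
  intro I hIc hL hR D hD
  obtain ⟨ι, p, e, hp, ⟨C, hC⟩, hbai, hqc⟩ := hqcbai I hIc hL hR
  haveI : p.NeBot := hp
  haveI : Nonempty ι := Filter.nonempty_of_neBot p
  have hC0 : (0 : ℝ) ≤ C := le_trans (norm_nonneg _) (hC (Classical.arbitrary ι))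
  obtain ⟨K, hK0, hKb⟩ :=
    ContinuousLinearMap.bound (σ₁₂ := RingHom.id ℂ) (E := A) (F := ↥I →L[ℂ] ℂ) D
  set U : Ultrafilter ι := Ultrafilter.of p with hU
  have hUp : (U : Filter ι) ≤ p := Ultrafilter.of_le p
  have hmI : ∀ (b : A) (i : ι), b * (e i : A) ∈ I := fun b i => hL b _ (e i).2
  set m : A → ι → ↥I := fun b i => ⟨b * (e i : A), hmI b i⟩ with hm
  set g : A → A → ι → ℂ := fun a b i => D a (m b i) with hg
  have hgb : ∀ a b i, ‖g a b i‖ ≤ K * C * ‖a‖ * ‖b‖ := by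
    intro a b i
    have h1 : ‖m b i‖ ≤ ‖b‖ * C := by
      calc ‖m b i‖ = ‖(m b i : A)‖ := rfl
        _ ≤ ‖b‖ * ‖(e i : A)‖ := norm_mul_le _ _
        _ ≤ ‖b‖ * C := mul_le_mul_of_nonneg_left (hC i) (norm_nonneg b)
    calc ‖g a b i‖ ≤ ‖D a‖ * ‖m b i‖ := (D a).le_opNorm _
      _ ≤ (K * ‖a‖) * (‖b‖ * C) :=
          mul_le_mul (hKb a) h1 (norm_nonneg _) (by positivity)
      _ = K * C * ‖a‖ * ‖b‖ := by ring
  have hlim : ∀ a b : A, ∃ c : ℂ, Tendsto (g a b) (U : Filter ι) (𝓝 c) := by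
    intro a b
    have hcpt : IsCompact (Metric.closedBall (0 : ℂ) (K * C * ‖a‖ * ‖b‖)) :=
      isCompact_closedBall _ _
    obtain ⟨c, _, hc⟩ := hcpt.ultrafilter_le_nhds (U.map (g a b)) (by
      rw [Ultrafilter.coe_map, Filter.le_principal_iff, Filter.mem_map]
      refine Filter.univ_mem' fun i => ?_
      simpa [Metric.mem_closedBall, dist_zero_right] using hgb a b i)
    exact ⟨c, by rwa [Ultrafilter.coe_map] at hc⟩
  choose Φ hΦ using hlim
  have huniq : ∀ {a b : A} {c : ℂ}, Tendsto (g a b) (U : Filter ι) (𝓝 c) → Φ a b = c :=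
    fun h => tendsto_nhds_unique (hΦ _ _) h
  have hma : ∀ b b' i, m (b + b') i = m b i + m b' i := fun b b' i =>
    Subtype.ext (add_mul b b' _)
  have hms : ∀ (c : ℂ) b i, m (c • b) i = c • m b i := fun c b i =>
    Subtype.ext (smul_mul_assoc c b _)
  have haddb : ∀ a b b', Φ a (b + b') = Φ a b + Φ a b' := by
    intro a b b'
    refine huniq ?_
    have heq : (fun i => g a b i + g a b' i) = g a (b + b') := by
      funext i
      simp only [hg, hma, map_add]
    rw [← heq]
    exact (hΦ a b).add (hΦ a b')
  have hsmulb : ∀ a (c : ℂ) b, Φ a (c • b) = c • Φ a b := by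
    intro a c b
    refine huniq ?_
    have heq : (fun i => c • g a b i) = g a (c • b) := by
      funext i
      simp only [hg, hms, map_smul]
    rw [← heq]
    exact (hΦ a b).const_smul c
  have hadda : ∀ a a' b, Φ (a + a') b = Φ a b + Φ a' b := by
    intro a a' b
    refine huniq ?_
    have heq : (fun i => g a b i + g a' b i) = g (a + a') b := by
      funext i
      simp only [hg, map_add, ContinuousLinearMap.add_apply]
    rw [← heq]
    exact (hΦ a b).add (hΦ a' b)
  have hsmula : ∀ (c : ℂ) a b, Φ (c • a) b = c • Φ a b := by
    intro c a b
    refine huniq ?_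
    have heq : (fun i => c • g a b i) = g (c • a) b := by
      funext i
      simp only [hg, map_smul, ContinuousLinearMap.smul_apply]
    rw [← heq]
    exact (hΦ a b).const_smul c
  have hΦb : ∀ a b, ‖Φ a b‖ ≤ K * C * ‖a‖ * ‖b‖ := fun a b =>
    le_of_tendsto' (hΦ a b).norm (hgb a b)
  let F1 : A → (A →L[ℂ] ℂ) := fun a =>
    LinearMap.mkContinuous
      { toFun := Φ a, map_add' := haddb a, map_smul' := hsmulb a }
      (K * C * ‖a‖) (fun b => hΦb a b)
  have hF1norm : ∀ a, ‖F1 a‖ ≤ K * C * ‖a‖ := fun a =>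
    LinearMap.mkContinuous_norm_le _ (by positivity) _
  let F : A →L[ℂ] (A →L[ℂ] ℂ) :=
    LinearMap.mkContinuous
      { toFun := F1,
        map_add' := fun a a' => ContinuousLinearMap.ext fun b => hadda a a' b,
        map_smul' := fun c a => ContinuousLinearMap.ext fun b => hsmula c a b }
      (K * C) (fun a => hF1norm a)
  have hFab : ∀ a b, F a b = Φ a b := fun a b => rfl
  -- F is a derivation into the dual of the algebra bimodule
  have hder : IsDerivation (algBimod A).dual F := by
    intro a b
    ext c
    show Φ (a * b) c = Φ b (c * a) + Φ a (b * c)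
    refine huniq ?_
    -- the defect element
    set w : ι → ↥I := fun i =>
      (⟨c * (e i : A) * a, hR a _ (hmI c i)⟩ : ↥I) - m (c * a) i with hw
    have hw0 : Tendsto (fun i => (w i : A)) p (𝓝 0) := by
      have h1 : ∀ i, (w i : A) = c * -((a * (e i : A)) - ((e i : A) * a)) := by
        intro i
        simp only [hw, hm, AddSubgroupClass.coe_sub]
        noncomm_ring
      have h2 : Tendsto (fun i => c * -((a * (e i : A)) - ((e i : A) * a))) p
          (𝓝 (c * -(0 : A))) := tendsto_const_nhds.mul (hqc a).neg
      simp only [neg_zero, mul_zero] at h2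
      exact (funext h1 : (fun i => (w i : A)) = _) ▸ h2
    have hwI : Tendsto w p (𝓝 (0 : ↥I)) := by
      rw [tendsto_subtype_rng]
      simpa using hw0
    have hDb0 : Tendsto (fun i => D b (w i)) p (𝓝 0) := by
      have := ((D b).continuous.tendsto (0 : ↥I)).comp hwI
      simpa [Function.comp_def] using this
    have hkey : ∀ i, g (a * b) c i = g b (c * a) i + g a (b * c) i + D b (w i) := by
      intro i
      have h1 : D (a * b) (m c i)
          = D b ((idealBimod I hL hR).r a (m c i))
            + D a ((idealBimod I hL hR).l b (m c i)) := by
        rw [hD a b]; rfl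
      have h2 : (idealBimod I hL hR).r a (m c i)
          = (⟨c * (e i : A) * a, hR a _ (hmI c i)⟩ : ↥I) := rfl
      have h3 : (idealBimod I hL hR).l b (m c i) = m (b * c) i :=
        Subtype.ext (mul_assoc b c ((e i : A))).symm
      have h4 : (⟨c * (e i : A) * a, hR a _ (hmI c i)⟩ : ↥I) = w i + m (c * a) i := by
        simp [hw]
      show D (a * b) (m c i) = D b (m (c * a) i) + D a (m (b * c) i) + D b (w i)
      rw [h1, h2, h3, h4, map_add]
      ring
    have hlim2 : Tendsto (fun i => g b (c * a) i + g a (b * c) i + D b (w i))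
        (U : Filter ι) (𝓝 (Φ b (c * a) + Φ a (b * c))) := by
      have := ((hΦ b (c * a)).add (hΦ a (b * c))).add (hDb0.mono_left hUp)
      simpa using this
    exact (funext hkey : g (a * b) c = _) ▸ hlim2
  obtain ⟨φ, hφ⟩ := hwa F hder
  refine ⟨φ.comp I.subtypeL, ?_⟩
  intro a
  ext x
  have hx : Φ a (↑x) = D a x := by
    refine huniq ?_
    have h1 : Tendsto (fun i => m (↑x) i) p (𝓝 x) := by
      rw [tendsto_subtype_rng]
      exact (hbai x).2
    have h2 := ((D a).continuous.tendsto x).comp h1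
    exact h2.mono_left hUp
  have h3 : F a (↑x) = φ ((↑x : A) * a) - φ (a * (↑x : A)) := by
    rw [hφ a]; rfl
  show D a x = φ ((↑x : A) * a) - φ (a * (↑x : A))
  rw [← hx, ← h3]
  exact (hFab a ↑x).symm

end Paper
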